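/- arXiv:2209.01594 — 3 statements merged into one kernel-verified Lean document; each statement's English description precedes it below -/
import Mathlib

section
/- Let b ∈ (0,1) and let (a_t)_{t≥1} be the real sequence defined by an initial condition a₁ > 0 and the recursion a_{t+1} = f(a_t), where f(a) = (1 − b·a/(1+a))·a. Then for every α > 0 there exists T such that for all t ≥ T, (1−α)/(b t) ≤ a_t ≤ (1+α)/(b t). -/
open Filter Finset Topology

/-- **Lemma 2 (Appendix B).** For `b ∈ (0,1)` and the sequence `a_{t+1} = (1 − b a_t/(1+a_t)) a_t`
with `a₁ > 0`, for every `α > 0` there exists `T` such that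
`(1−α)/(b t) ≤ a_t ≤ (1+α)/(b t)` for all `t ≥ T`. -/
theorem stmt_3 (b : ℝ) (hb0 : 0 < b) (hb1 : b < 1)
    (a : ℕ → ℝ) (ha1 : 0 < a 1)
    (hrec : ∀ t ≥ 1, a (t + 1) = (1 - b * (a t / (1 + a t))) * a t)
    (α : ℝ) (hα : 0 < α) :
    ∃ T : ℕ, ∀ t ≥ T, (1 - α) / (b * t) ≤ a t ∧ a t ≤ (1 + α) / (b * t) := by
  set c : ℕ → ℝ := fun n => a (n + 1) with hc
  have hrec' : ∀ n, c (n + 1) = (1 - b * (c n / (1 + c n))) * c n := by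
    intro n
    simpa [hc] using hrec (n + 1) (by omega)
  -- positivity
  have hcpos : ∀ n, 0 < c n := by
    intro n
    induction n with
    | zero => simpa [hc] using ha1
    | succ k ih =>
      rw [hrec' k]
      have h1 : 0 < 1 + c k := by linarith
      have hratio : c k / (1 + c k) < 1 := (div_lt_one h1).2 (by linarith)
      have hratio0 : 0 ≤ c k / (1 + c k) := div_nonneg ih.le h1.le
      have : b * (c k / (1 + c k)) < 1 :=
        lt_of_le_of_lt (mul_le_of_le_one_right hb0.le hratio.le) hb1
      have : 0 < 1 - b * (c k / (1 + c k)) := by linarith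
      positivity
  have hfactor : ∀ n, 0 < 1 - b * (c n / (1 + c n)) := by
    intro n
    have h1 : 0 < 1 + c n := by linarith [hcpos n]
    have hratio : c n / (1 + c n) < 1 := (div_lt_one h1).2 (by linarith [hcpos n])
    have : b * (c n / (1 + c n)) < 1 :=
      lt_of_le_of_lt (mul_le_of_le_one_right hb0.le hratio.le) hb1
    linarith
  -- antitone
  have hanti : Antitone c := by
    apply antitone_nat_of_succ_le
    intro n
    rw [hrec' n]
    have h1 : 0 < 1 + c n := by linarith [hcpos n]
    have hratio0 : 0 ≤ b * (c n / (1 + c n)) :=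
      mul_nonneg hb0.le (div_nonneg (hcpos n).le h1.le)
    nlinarith [hcpos n]
  -- convergence to the infimum
  have hbdd : BddBelow (Set.range c) := ⟨0, fun x ⟨n, hn⟩ => hn ▸ (hcpos n).le⟩
  set L : ℝ := ⨅ n, c n with hL
  have htend : Tendsto c atTop (𝓝 L) := tendsto_atTop_ciInf hanti hbdd
  have hL0 : 0 ≤ L := le_ciInf fun n => (hcpos n).le
  -- the limit is zero
  have hLzero : L = 0 := by
    have htend1 : Tendsto (fun n => c (n + 1)) atTop (𝓝 L) :=
      htend.comp (tendsto_add_atTop_nat 1)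
    have h1L : (1 : ℝ) + L ≠ 0 := by linarith
    have htend2 : Tendsto (fun n => (1 - b * (c n / (1 + c n))) * c n) atTop
        (𝓝 ((1 - b * (L / (1 + L))) * L)) := by
      refine Tendsto.mul (Tendsto.sub tendsto_const_nhds (Tendsto.mul tendsto_const_nhds
        (Tendsto.div htend (Tendsto.add tendsto_const_nhds htend) h1L))) htend
    have heq : L = (1 - b * (L / (1 + L))) * L := by
      have : Tendsto (fun n => c (n + 1)) atTop (𝓝 ((1 - b * (L / (1 + L))) * L)) := by
        simpa only [hrec'] using htend2
      exact tendsto_nhds_unique htend1 this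
    have h1L' : (0:ℝ) < 1 + L := by linarith
    have hkey : b * (L / (1 + L)) * L = 0 := by linarith [heq]
    rcases mul_eq_zero.mp hkey with h | h
    · rcases mul_eq_zero.mp h with h' | h'
      · exact absurd h' hb0.ne'
      · have := (div_eq_zero_iff.mp h')
        rcases this with h'' | h''
        · exact h''
        · exact absurd h'' h1L
    · exact h
  have hc0 : Tendsto c atTop (𝓝 0) := hLzero ▸ htend
  -- increment of the inverse sequence
  have hkey : ∀ n, (c (n + 1))⁻¹ = (c n)⁻¹ + b / (1 + (1 - b) * c n) := by
    intro n
    have h1 : (0:ℝ) < 1 + c n := by linarith [hcpos n]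
    have h2 : (0:ℝ) < 1 + (1 - b) * c n := by nlinarith [hcpos n]
    have h3 : c n ≠ 0 := (hcpos n).ne'
    have h4 : (1 - b * (c n / (1 + c n))) ≠ 0 := (hfactor n).ne'
    have hf : 1 - b * (c n / (1 + c n)) = (1 + (1 - b) * c n) / (1 + c n) := by
      field_simp; ring
    rw [hrec' n, hf]
    rw [div_mul_eq_mul_div, inv_div, div_eq_iff (by positivity)]
    rw [add_mul, div_mul_eq_mul_div, mul_comm (1 + (1 - b) * c n) (c n), ← mul_assoc,
      inv_mul_cancel₀ h3, mul_div_assoc, mul_div_cancel_right₀ _ h2.ne']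
    ring
  -- sum formula
  have hsum : ∀ n, (c n)⁻¹ = (c 0)⁻¹ + ∑ i ∈ range n, b / (1 + (1 - b) * c i) := by
    intro n
    induction n with
    | zero => simp
    | succ k ih => rw [hkey k, ih, sum_range_succ]; ring
  -- Cesàro
  have hd : Tendsto (fun n => b / (1 + (1 - b) * c n)) atTop (𝓝 b) := by
    have : Tendsto (fun n => 1 + (1 - b) * c n) atTop (𝓝 1) := by
      have h := Tendsto.const_add (1:ℝ) (Tendsto.const_mul (1 - b) hc0)
      simpa using h
    have := Tendsto.div (tendsto_const_nhds (x := b)) this one_ne_zero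
    simpa [Pi.div_def] using this
  have hces : Tendsto (fun n : ℕ => ((n : ℝ))⁻¹ * ∑ i ∈ range n, b / (1 + (1 - b) * c i))
      atTop (𝓝 b) := hd.cesaro
  have hxn : Tendsto (fun n : ℕ => (c n)⁻¹ / n) atTop (𝓝 b) := by
    have h1 : Tendsto (fun n : ℕ => (c 0)⁻¹ / n) atTop (𝓝 0) :=
      tendsto_const_div_atTop_nhds_zero_nat _
    have := h1.add hces
    rw [zero_add] at this
    refine this.congr fun n => ?_
    rw [hsum n]
    rw [add_div]
    ring
  -- n * c n → b⁻¹
  have hnc : Tendsto (fun n : ℕ => (n : ℝ) * c n) atTop (𝓝 b⁻¹) := by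
    have := hxn.inv₀ hb0.ne'
    refine this.congr fun n => ?_
    rw [div_eq_mul_inv, mul_inv, inv_inv, inv_inv, mul_comm]
  -- b * (n+1) * c n → 1
  have hfin : Tendsto (fun n : ℕ => b * (n + 1) * c n) atTop (𝓝 1) := by
    have h1 : Tendsto (fun n : ℕ => b * ((n : ℝ) * c n) + b * c n) atTop
        (𝓝 (b * b⁻¹ + b * 0)) :=
      (tendsto_const_nhds.mul hnc).add (tendsto_const_nhds.mul hc0)
    have h2 : b * b⁻¹ + b * 0 = 1 := by field_simp; simp
    rw [h2] at h1
    refine h1.congr fun n => by ring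
  -- conclude
  rw [Metric.tendsto_atTop] at hfin
  obtain ⟨N, hN⟩ := hfin α hα
  refine ⟨N + 1, fun t ht => ?_⟩
  obtain ⟨n, rfl⟩ : ∃ n, t = n + 1 := ⟨t - 1, by omega⟩
  have hn : n ≥ N := by omega
  have := hN n hn
  rw [Real.dist_eq, abs_sub_lt_iff] at this
  have hbt : (0:ℝ) < b * (n + 1 : ℕ) := by
    have : (0:ℝ) < ((n:ℝ) + 1) := by positivity
    push_cast
    positivity
  have hat : a (n + 1) = c n := rfl
  constructor
  · rw [div_le_iff₀ hbt, hat]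
    push_cast
    nlinarith [this.2]
  · rw [le_div_iff₀ hbt, hat]
    push_cast
    nlinarith [this.1]
end

section
/- Let b ∈ (0,1) and let (a_t)_{t≥1} satisfy a₁ > 0 and a_{t+1} = (1 − b·a_t/(1+a_t))·a_t for all t ≥ 1. Define γ_t = 1/a_t − b t. Then the sequence (γ_t)_{t≥1} is strictly decreasing: γ_{t+1} < γ_t for all t ≥ 1. -/
/-- For `b ∈ (0,1)` and the sequence `a_{t+1} = (1 − b a_t/(1+a_t)) a_t` with `a₁ > 0`,
the sequence `γ_t = 1/a_t − b t` is strictly decreasing. -/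
theorem stmt_4 (b : ℝ) (hb0 : 0 < b) (hb1 : b < 1)
    (a : ℕ → ℝ) (ha1 : 0 < a 1)
    (hrec : ∀ t ≥ 1, a (t + 1) = (1 - b * (a t / (1 + a t))) * a t)
    (γ : ℕ → ℝ) (hγ : ∀ t, γ t = 1 / a t - b * t) :
    ∀ t ≥ 1, γ (t + 1) < γ t := by
  have hpos : ∀ t ≥ 1, 0 < a t := by
    intro t ht
    induction t with
    | zero => omega
    | succ n ih =>
      rcases Nat.lt_or_ge n 1 with h | h
      · interval_cases n
        · simpa using ha1
      · have hn := ih h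
        rw [hrec n h]
        have h1 : 0 < 1 + a n := by linarith
        have hfrac : a n / (1 + a n) < 1 := by rw [div_lt_one h1]; linarith
        have hfp : 0 < a n / (1 + a n) := div_pos hn h1
        have : 0 < 1 - b * (a n / (1 + a n)) := by nlinarith
        positivity
  intro t ht
  have ha := hpos t ht
  have h1 : 0 < 1 + a t := by linarith
  have hfrac : a t / (1 + a t) < 1 := by rw [div_lt_one h1]; linarith
  have hfp : 0 < a t / (1 + a t) := div_pos ha h1
  have key : 0 < 1 - b * (a t / (1 + a t)) := by nlinarith
  have hD : (0:ℝ) < 1 + (1 - b) * a t := by nlinarith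
  have hkey : 1 / ((1 - b * (a t / (1 + a t))) * a t) - 1 / a t
      = b / (1 + (1 - b) * a t) := by
    have e : (1 - b * (a t / (1 + a t))) * a t
        = a t * (1 + (1 - b) * a t) / (1 + a t) := by
      field_simp; ring
    rw [e, one_div_div,
      div_sub_div _ _ (by positivity) ha.ne', div_eq_div_iff (by positivity) hD.ne']
    ring
  have hlt : b / (1 + (1 - b) * a t) < b := by
    rw [div_lt_iff₀ hD]
    nlinarith [mul_pos (mul_pos hb0 (sub_pos.mpr hb1)) ha]
  rw [hγ (t + 1), hγ t, hrec t ht]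
  push_cast
  linarith
end

section
/- Let L and P be positive integers with P ≤ L, let δ > 0, and let X ∈ R^{L×P}. Let μ₁, …, μ_P be the eigenvalues (with multiplicity) of the symmetric positive semidefinite matrix Xᵀ X. Then tr((I_L − X (δ I_P + Xᵀ X)⁻¹ Xᵀ)²) = (L − P) + Σ_{i=1}^{P} δ²/(δ + μ_i)². -/
open Matrix

/-- **Trace of the squared error contraction matrix.** For `A = I_L − X (δ I_P + Xᵀ X)⁻¹ Xᵀ`
and eigenvalues `μᵢ` of `Xᵀ X`,
`tr(A²) = (L − P) + Σᵢ δ²/(δ + μᵢ)²`. -/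
theorem stmt_15 (L P : ℕ) (hL : 0 < L) (hP : 0 < P) (hPL : P ≤ L)
    (δ : ℝ) (hδ : 0 < δ) (X : Matrix (Fin L) (Fin P) ℝ)
    (hH : (Xᵀ * X).IsHermitian) :
    ((1 - X * ((δ • (1 : Matrix (Fin P) (Fin P) ℝ) + Xᵀ * X)⁻¹) * Xᵀ)
        * (1 - X * ((δ • (1 : Matrix (Fin P) (Fin P) ℝ) + Xᵀ * X)⁻¹) * Xᵀ)).trace
      = ((L : ℝ) - P) + ∑ i, δ ^ 2 / (δ + hH.eigenvalues i) ^ 2 := by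
  set S : Matrix (Fin P) (Fin P) ℝ := Xᵀ * X with hS
  set M : Matrix (Fin P) (Fin P) ℝ := δ • 1 + S with hM
  set U : Matrix (Fin P) (Fin P) ℝ := (hH.eigenvectorUnitary : Matrix (Fin P) (Fin P) ℝ) with hU
  have hUU : star U * U = 1 := (Matrix.mem_unitaryGroup_iff').mp hH.eigenvectorUnitary.2
  have hUU' : U * star U = 1 := (Matrix.mem_unitaryGroup_iff).mp hH.eigenvectorUnitary.2
  have hμ : ∀ i, 0 < δ + hH.eigenvalues i := by
    intro i
    have : 0 ≤ hH.eigenvalues i := by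
      have := (Matrix.posSemidef_conjTranspose_mul_self X).eigenvalues_nonneg i
      simpa using this
    linarith
  have hspec : S = U * diagonal hH.eigenvalues * star U := by
    have := hH.spectral_theorem
    simpa using this
  have hd : (diagonal (fun i => δ + hH.eigenvalues i) : Matrix (Fin P) (Fin P) ℝ)
      = δ • 1 + diagonal hH.eigenvalues := by
    ext i j
    by_cases h : i = j <;> simp [Matrix.diagonal_apply, Matrix.one_apply, h]
  have hMspec : M = U * diagonal (fun i => δ + hH.eigenvalues i) * star U := by
    rw [hd, mul_add, add_mul, mul_smul_comm, smul_mul_assoc, mul_one, hUU', hM, ← hspec]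
  set N : Matrix (Fin P) (Fin P) ℝ :=
    U * diagonal (fun i => (δ + hH.eigenvalues i)⁻¹) * star U with hN
  have hMN : M * N = 1 := by
    rw [hMspec, hN]
    calc U * diagonal (fun i => δ + hH.eigenvalues i) * star U *
          (U * diagonal (fun i => (δ + hH.eigenvalues i)⁻¹) * star U)
        = U * diagonal (fun i => δ + hH.eigenvalues i) * (star U * U) *
          diagonal (fun i => (δ + hH.eigenvalues i)⁻¹) * star U := by
          simp only [mul_assoc]
      _ = U * (diagonal (fun i => δ + hH.eigenvalues i) *
          diagonal (fun i => (δ + hH.eigenvalues i)⁻¹)) * star U := by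
          rw [hUU]; simp only [mul_one, mul_assoc]
      _ = 1 := by
          rw [diagonal_mul_diagonal]
          have : (fun i => (δ + hH.eigenvalues i) * (δ + hH.eigenvalues i)⁻¹)
              = fun _ : Fin P => (1:ℝ) := by
            funext i; exact mul_inv_cancel₀ (hμ i).ne'
          rw [this, diagonal_one, mul_one, hUU']
  have hinv : M⁻¹ = N := inv_eq_right_inv hMN
  have hMinv : M * M⁻¹ = 1 := by rw [hinv]; exact hMN
  have ht1 : M⁻¹.trace = ∑ i, (δ + hH.eigenvalues i)⁻¹ := by
    rw [hinv, hN, trace_mul_comm, ← mul_assoc, hUU, one_mul, trace_diagonal]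
  have hNN : M⁻¹ * M⁻¹ = U * diagonal (fun i => ((δ + hH.eigenvalues i)⁻¹)^2) * star U := by
    rw [hinv, hN]
    calc U * diagonal (fun i => (δ + hH.eigenvalues i)⁻¹) * star U *
          (U * diagonal (fun i => (δ + hH.eigenvalues i)⁻¹) * star U)
        = U * diagonal (fun i => (δ + hH.eigenvalues i)⁻¹) * (star U * U) *
          diagonal (fun i => (δ + hH.eigenvalues i)⁻¹) * star U := by
          simp only [mul_assoc]
      _ = U * (diagonal (fun i => (δ + hH.eigenvalues i)⁻¹) *
          diagonal (fun i => (δ + hH.eigenvalues i)⁻¹)) * star U := by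
          rw [hUU]; simp only [mul_one, mul_assoc]
      _ = _ := by rw [diagonal_mul_diagonal]; ring_nf
  have ht2 : (M⁻¹ * M⁻¹).trace = ∑ i, ((δ + hH.eigenvalues i)⁻¹)^2 := by
    rw [hNN, trace_mul_comm, ← mul_assoc, hUU, one_mul, trace_diagonal]
  have hSC : S * M⁻¹ = 1 - δ • M⁻¹ := by
    have h : S = M - δ • 1 := by rw [hM]; abel
    rw [h, sub_mul, hMinv, smul_mul_assoc, one_mul]
  set B : Matrix (Fin L) (Fin L) ℝ := X * M⁻¹ * Xᵀ with hB
  have htB : B.trace = (P : ℝ) - δ * M⁻¹.trace := by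
    rw [hB, trace_mul_comm]
    have h : Xᵀ * (X * M⁻¹) = S * M⁻¹ := by rw [hS, Matrix.mul_assoc]
    rw [h, hSC, trace_sub, trace_smul, trace_one]
    simp
  have htBB : (B * B).trace = (P : ℝ) - 2 * δ * M⁻¹.trace + δ^2 * (M⁻¹ * M⁻¹).trace := by
    have h1 : B * B = X * (M⁻¹ * (S * (M⁻¹ * Xᵀ))) := by
      rw [hB, hS]; simp only [Matrix.mul_assoc]
    rw [h1, trace_mul_comm]
    have h2' : M⁻¹ * (S * (M⁻¹ * Xᵀ)) * X = M⁻¹ * (S * (M⁻¹ * S)) := by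
      rw [hS]; simp only [Matrix.mul_assoc]
    rw [h2', trace_mul_comm]
    have h3 : S * (M⁻¹ * S) * M⁻¹ = (S * M⁻¹) * (S * M⁻¹) := by
      simp only [mul_assoc]
    rw [h3, hSC]
    have h4 : (1 - δ • M⁻¹) * (1 - δ • M⁻¹)
        = 1 - δ • M⁻¹ - δ • M⁻¹ + (δ * δ) • (M⁻¹ * M⁻¹) := by
      simp only [sub_mul, mul_sub, one_mul, mul_one, smul_mul_assoc, mul_smul_comm,
        smul_sub, smul_smul]
      abel
    rw [h4, trace_add, trace_sub, trace_sub, trace_one, trace_smul, trace_smul]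
    simp only [smul_eq_mul, Fintype.card_fin]
    ring
  have expand1 : (1 - B) * (1 - B) = 1 - B - B + B * B := by noncomm_ring
  rw [expand1, trace_add, trace_sub, trace_sub, trace_one, htB, htBB, ht1, ht2]
  simp only [Fintype.card_fin]
  have hsum : ∑ i, δ ^ 2 / (δ + hH.eigenvalues i) ^ 2
      = δ ^ 2 * ∑ i, ((δ + hH.eigenvalues i)⁻¹)^2 := by
    rw [Finset.mul_sum]
    exact Finset.sum_congr rfl fun i _ => by rw [div_eq_mul_inv, ← inv_pow]
  rw [hsum]
  ring
end
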